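/- Let M be a topological space, E a finite-dimensional real normed vector space, and ψ : M → E a continuous map admitting a local cone structure C. Then ψ is convex if and only if the following three conditions hold: (1) the range of ψ is a convex set; (2) every fiber of ψ is preconnected; and (3) the corestriction ψ : M → range ψ is an open map (where range ψ carries the subspace topology). -/

import Mathlib

open Topology

/-- A local cone structure for a continuous map `ψ : M → E`: an assignment of a
closed subset `C x ⊆ E` to each `x ∈ M` such that (S1) every neighborhood of `x`
contains an open neighborhood `U` of `x` with `ψ '' U ⊆ C x` and `ψ '' U` a
neighborhood of `ψ x` in `C x` (subspace topology), and (S2) `C` is constant on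
connected components of fibers of `ψ`. -/
structure IsLocalConeStructure {M E : Type*} [TopologicalSpace M] [TopologicalSpace E]
    (ψ : M → E) (C : M → Set E) : Prop where
  isClosed : ∀ x : M, IsClosed (C x)
  locally : ∀ x : M, ∀ V ∈ 𝓝 x, ∃ U : Set M, IsOpen U ∧ x ∈ U ∧ U ⊆ V ∧
      ψ '' U ⊆ C x ∧ ψ '' U ∈ 𝓝[C x] (ψ x)
  fiberCompat : ∀ x y : M, y ∈ connectedComponentIn (ψ ⁻¹' {ψ x}) x → C x = C y

/-- If all segment preimages are connected then the range is convex. -/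
lemma range_convex_of_seg {M E : Type*} [TopologicalSpace M]
    [NormedAddCommGroup E] [NormedSpace ℝ E] (ψ : M → E) (hcont : Continuous ψ)
    (hseg : ∀ u ∈ Set.range ψ, ∀ v ∈ Set.range ψ, IsConnected (ψ ⁻¹' segment ℝ u v)) :
    Convex ℝ (Set.range ψ) := by
  intro u hu v hv a b ha hb hab
  rcases eq_or_ne u v with rfl | hne
  · rwa [Convex.combo_self hab]
  obtain ⟨g, hg1, hg2⟩ := exists_dual_vector ℝ (v - u) (norm_ne_zero_iff.mpr (sub_ne_zero.mpr hne.symm))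
  have hgvu : g (v - u) = ‖v - u‖ := by exact_mod_cast hg2
  have hpos : (0:ℝ) < g v - g u := by
    rw [← map_sub, hgvu]; exact norm_pos_iff.mpr (sub_ne_zero.mpr hne.symm)
  set S : Set E := ψ '' (ψ ⁻¹' segment ℝ u v) with hS
  have hScon : IsPreconnected S :=
    ((hseg u hu v hv).isPreconnected).image ψ hcont.continuousOn
  have huS : u ∈ S := by
    obtain ⟨m, hm⟩ := hu
    exact ⟨m, by simp [hm, left_mem_segment], hm⟩
  have hvS : v ∈ S := by
    obtain ⟨m, hm⟩ := hv
    exact ⟨m, by simp [hm, right_mem_segment], hm⟩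
  have hT : IsPreconnected (g '' S) := hScon.image g g.continuous.continuousOn
  have hIcc : Set.Icc (g u) (g v) ⊆ g '' S :=
    hT.Icc_subset ⟨u, huS, rfl⟩ ⟨v, hvS, rfl⟩
  have hw : a * g u + b * g v ∈ Set.Icc (g u) (g v) := by
    have e1 : a * g u + b * g v - g u = b * (g v - g u) := by
      linear_combination (g u) * hab
    have e2 : g v - (a * g u + b * g v) = a * (g v - g u) := by
      linear_combination (-(g v)) * hab
    constructor
    · nlinarith [mul_nonneg hb hpos.le, e1]
    · nlinarith [mul_nonneg ha hpos.le, e2]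
  obtain ⟨e, heS, hge⟩ := hIcc hw
  obtain ⟨m, hmP, hme⟩ := heS
  have hmemseg : e ∈ segment ℝ u v := hme ▸ hmP
  obtain ⟨a', b', ha', hb', hab', he⟩ := hmemseg
  have hge' : a' * g u + b' * g v = a * g u + b * g v := by
    rw [← hge, ← he]; simp [map_add, map_smul]
  have ha'e : a' = 1 - b' := by linarith
  have hae : a = 1 - b := by linarith
  rw [ha'e, hae] at hge'
  have h1 : b' * (g v - g u) = b * (g v - g u) := by linear_combination hge'
  have hbb : b' = b := mul_right_cancel₀ (ne_of_gt hpos) h1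
  have haa : a' = a := by linarith
  have : e = a • u + b • v := by rw [← he, haa, hbb]
  exact ⟨m, by rw [hme, this]⟩

/-- Fibers over range points are connected. -/
lemma fiber_preconnected_of_seg {M E : Type*} [TopologicalSpace M]
    [NormedAddCommGroup E] [NormedSpace ℝ E] (ψ : M → E)
    (hseg : ∀ u ∈ Set.range ψ, ∀ v ∈ Set.range ψ, IsConnected (ψ ⁻¹' segment ℝ u v)) :
    ∀ u : E, IsPreconnected (ψ ⁻¹' {u}) := by
  intro u
  by_cases hu : u ∈ Set.range ψ
  · have := (hseg u hu u hu).isPreconnected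
    rwa [segment_same] at this
  · have : ψ ⁻¹' {u} = ∅ := by
      ext m; simp only [Set.mem_preimage, Set.mem_singleton_iff, Set.mem_empty_iff_false,
        iff_false]
      exact fun h => hu ⟨m, h⟩
    rw [this]; exact isPreconnected_empty

/-- Key lemma: nearby range points lie in the local cone. -/
lemma range_subset_cone {M E : Type*} [TopologicalSpace M]
    [NormedAddCommGroup E] [NormedSpace ℝ E] (ψ : M → E) (C : M → Set E)
    (hcont : Continuous ψ) (hC : IsLocalConeStructure ψ C)
    (hseg : ∀ u ∈ Set.range ψ, ∀ v ∈ Set.range ψ, IsConnected (ψ ⁻¹' segment ℝ u v))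
    (p : M) (U' : Set M) (hU'o : IsOpen U') (hpU' : p ∈ U') (hsub : ψ '' U' ⊆ C p)
    (δ : ℝ) (hδ : 0 < δ) (hball : Metric.ball (ψ p) δ ∩ C p ⊆ ψ '' U')
    (y : E) (hyr : y ∈ Set.range ψ) (hyb : y ∈ Metric.ball (ψ p) δ) : y ∈ C p := by
  have hsegball : segment ℝ (ψ p) y ⊆ Metric.ball (ψ p) δ :=
    (convex_ball _ _).segment_subset (Metric.mem_ball_self hδ) hyb
  set P : Set M := ψ ⁻¹' segment ℝ (ψ p) y with hPdef
  have hP : IsConnected P := hseg _ ⟨p, rfl⟩ y hyr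
  -- every q in P with ψ q ∈ C p lies in the interior of ψ⁻¹(C p)
  have hint : ∀ q ∈ P, ψ q ∈ C p → q ∈ interior (ψ ⁻¹' C p) := by
    intro q hqP hqC
    obtain ⟨qt, hqtU, hqt⟩ := hball ⟨hsegball hqP, hqC⟩
    -- hqt : ψ qt = ψ q
    have hfib : IsPreconnected (ψ ⁻¹' {ψ q}) := by
      have := (hseg (ψ q) ⟨q, rfl⟩ (ψ q) ⟨q, rfl⟩).isPreconnected
      rwa [segment_same] at this
    have hqt_mem : qt ∈ connectedComponentIn (ψ ⁻¹' {ψ q}) q := by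
      have h2 : ψ ⁻¹' {ψ q} ⊆ connectedComponentIn (ψ ⁻¹' {ψ q}) q :=
        hfib.subset_connectedComponentIn rfl subset_rfl
      exact h2 hqt
    have hCq : C q = C qt := hC.fiberCompat q qt hqt_mem
    obtain ⟨U'', hU''o, hqtU'', hU''sub, hU''C, hU''nhd⟩ :=
      hC.locally qt U' (hU'o.mem_nhds hqtU)
    obtain ⟨δ₂, hδ₂, hb₂⟩ := Metric.mem_nhdsWithin_iff.mp hU''nhd
    obtain ⟨V, hVo, hqV, hVsub, hVC, -⟩ := hC.locally q (ψ ⁻¹' Metric.ball (ψ q) δ₂)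
      ((Metric.isOpen_ball.preimage hcont).mem_nhds
        (by simp [Metric.mem_ball_self hδ₂]))
    refine mem_interior.mpr ⟨V, fun m hm => ?_, hVo, hqV⟩
    have h1 : ψ m ∈ C q := hVC ⟨m, hm, rfl⟩
    have h2 : ψ m ∈ Metric.ball (ψ qt) δ₂ := by rw [hqt]; exact hVsub hm
    have h3 : ψ m ∈ ψ '' U'' := hb₂ ⟨h2, by rw [← hCq]; exact h1⟩
    exact hsub (Set.image_mono hU''sub h3)
  -- clopen argument on the connected set P
  have hpC : ψ p ∈ C p := hsub ⟨p, hpU', rfl⟩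
  have hpP : p ∈ P := left_mem_segment ℝ (ψ p) y
  have hPsub : P ⊆ ψ ⁻¹' C p := by
    by_contra hnot
    obtain ⟨m, hmP, hmC⟩ := Set.not_subset.mp hnot
    have hOpen2 : IsOpen ((ψ ⁻¹' C p)ᶜ) := ((hC.isClosed p).preimage hcont).isOpen_compl
    obtain ⟨n, hnP, hn1, hn2⟩ := hP.isPreconnected (interior (ψ ⁻¹' C p)) ((ψ ⁻¹' C p)ᶜ)
      isOpen_interior hOpen2
      (fun m' hm' => by
        by_cases h : ψ m' ∈ C p
        · exact Or.inl (hint m' hm' h)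
        · exact Or.inr h)
      ⟨p, hpP, hint p hpP hpC⟩ ⟨m, hmP, hmC⟩
    exact hn2 (interior_subset hn1)
  obtain ⟨m, hm⟩ := hyr
  have hmP : m ∈ P := by
    rw [hPdef]; simp only [Set.mem_preimage, hm]
    exact right_mem_segment ℝ (ψ p) y
  have h5 : ψ m ∈ C p := hPsub hmP
  rwa [hm] at h5

/-- Let `ψ : M → E` be a continuous map into a finite-dimensional real
normed vector space admitting a local cone structure. Then `ψ` is convex if and only
if its range is convex, its fibers are preconnected, and its corestriction onto its
range is open. -/
theorem stmt12 {M E : Type*} [TopologicalSpace M]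
    [NormedAddCommGroup E] [NormedSpace ℝ E] [FiniteDimensional ℝ E]
    (ψ : M → E) (C : M → Set E)
    (hcont : Continuous ψ) (hC : IsLocalConeStructure ψ C) :
    (∀ u ∈ Set.range ψ, ∀ v ∈ Set.range ψ,
        IsConnected (ψ ⁻¹' segment ℝ u v)) ↔
      (Convex ℝ (Set.range ψ) ∧
        (∀ u : E, IsPreconnected (ψ ⁻¹' {u})) ∧
        IsOpenMap (Set.rangeFactorization ψ)) := by
  constructor
  · intro hseg
    refine ⟨range_convex_of_seg ψ hcont hseg, fiber_preconnected_of_seg ψ hseg, ?_⟩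
    -- openness of the corestriction
    intro U hU
    have hkey : ∀ x ∈ U, ∃ δ > 0,
        Metric.ball (ψ x) δ ∩ Set.range ψ ⊆ ψ '' U := by
      intro x hx
      obtain ⟨U', hU'o, hxU', hU'U, hU'C, hnhd⟩ := hC.locally x U (hU.mem_nhds hx)
      obtain ⟨δ, hδ, hb⟩ := Metric.mem_nhdsWithin_iff.mp hnhd
      refine ⟨δ, hδ, fun y hy => ?_⟩
      have hyC : y ∈ C x :=
        range_subset_cone ψ C hcont hC hseg x U' hU'o hxU' hU'C δ hδ hb y hy.2 hy.1
      exact Set.image_mono hU'U (hb ⟨hy.1, hyC⟩)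
    rw [isOpen_iff_mem_nhds]
    rintro a ⟨x, hxU, rfl⟩
    rw [mem_nhds_subtype]
    obtain ⟨δ, hδ, hb⟩ := hkey x hxU
    refine ⟨Metric.ball (ψ x) δ, Metric.ball_mem_nhds _ hδ, ?_⟩
    rintro ⟨w, hwr⟩ hw
    obtain ⟨m, hmU, hm⟩ := hb ⟨hw, hwr⟩
    exact ⟨m, hmU, Subtype.ext hm⟩
  · rintro ⟨hconv, hfib, hopen⟩ u hu v hv
    have hsegr : segment ℝ u v ⊆ Set.range ψ := hconv.segment_subset hu hv
    obtain ⟨a₀, ha₀⟩ := hu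
    constructor
    · exact ⟨a₀, by simp [ha₀, left_mem_segment]⟩
    intro A B hA hB hsub ⟨a, haP, haA⟩ ⟨b, hbP, hbB⟩
    by_contra hne
    rw [Set.not_nonempty_iff_eq_empty] at hne
    -- each fiber over the segment lies entirely in A or in B
    have hfibAB : ∀ w ∈ segment ℝ u v, ψ ⁻¹' {w} ⊆ A ∨ ψ ⁻¹' {w} ⊆ B := by
      intro w hw
      have hfP : ψ ⁻¹' {w} ⊆ ψ ⁻¹' segment ℝ u v := by
        intro m hm; simp only [Set.mem_preimage, Set.mem_singleton_iff] at hm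
        simp [Set.mem_preimage, hm, hw]
      by_contra h
      push_neg at h
      obtain ⟨h1, h2⟩ := h
      obtain ⟨m1, hm1f, hm1A⟩ := Set.not_subset.mp h1
      obtain ⟨m2, hm2f, hm2B⟩ := Set.not_subset.mp h2
      have hm1B : m1 ∈ B := (hsub (hfP hm1f)).resolve_left hm1A
      have hm2A : m2 ∈ A := (hsub (hfP hm2f)).resolve_right hm2B
      obtain ⟨n, hnf, hnA, hnB⟩ := hfib w A B hA hB (hfP.trans hsub)
        ⟨m2, hm2f, hm2A⟩ ⟨m1, hm1f, hm1B⟩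
      have : n ∈ ψ ⁻¹' segment ℝ u v ∩ (A ∩ B) := ⟨hfP hnf, hnA, hnB⟩
      rw [hne] at this
      exact this
    -- produce open sets in E cutting out ψ '' A and ψ '' B on the range
    have hWA := isOpen_induced_iff.mp (hopen A hA)
    have hWB := isOpen_induced_iff.mp (hopen B hB)
    obtain ⟨WA, hWAo, hWAe⟩ := hWA
    obtain ⟨WB, hWBo, hWBe⟩ := hWB
    have himgA : ∀ {m : M}, m ∈ A → ψ m ∈ WA := by
      intro m hm
      have : Set.rangeFactorization ψ m ∈ Subtype.val ⁻¹' WA := by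
        rw [hWAe]; exact ⟨m, hm, rfl⟩
      exact this
    have himgB : ∀ {m : M}, m ∈ B → ψ m ∈ WB := by
      intro m hm
      have : Set.rangeFactorization ψ m ∈ Subtype.val ⁻¹' WB := by
        rw [hWBe]; exact ⟨m, hm, rfl⟩
      exact this
    have hWAr : ∀ {w : E} (hw : w ∈ Set.range ψ), w ∈ WA → ∃ m ∈ A, ψ m = w := by
      intro w hw hwWA
      have : (⟨w, hw⟩ : Set.range ψ) ∈ Subtype.val ⁻¹' WA := hwWA
      rw [hWAe] at this
      obtain ⟨m, hmA, hm⟩ := this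
      exact ⟨m, hmA, congrArg Subtype.val hm⟩
    have hWBr : ∀ {w : E} (hw : w ∈ Set.range ψ), w ∈ WB → ∃ m ∈ B, ψ m = w := by
      intro w hw hwWB
      have : (⟨w, hw⟩ : Set.range ψ) ∈ Subtype.val ⁻¹' WB := hwWB
      rw [hWBe] at this
      obtain ⟨m, hmB, hm⟩ := this
      exact ⟨m, hmB, congrArg Subtype.val hm⟩
    -- the segment is preconnected; contradiction
    obtain ⟨w, hwseg, hwA, hwB⟩ := (convex_segment u v).isPreconnected WA WB hWAo hWBo
      (fun w hw => by
        obtain ⟨m, hm⟩ := hsegr hw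
        have hmP : m ∈ ψ ⁻¹' segment ℝ u v := by simp [Set.mem_preimage, hm, hw]
        rcases hsub hmP with h | h
        · exact Or.inl (hm ▸ himgA h)
        · exact Or.inr (hm ▸ himgB h))
      ⟨ψ a, haP, himgA haA⟩ ⟨ψ b, hbP, himgB hbB⟩
    have hwr : w ∈ Set.range ψ := hsegr hwseg
    obtain ⟨m1, hm1A, hm1⟩ := hWAr hwr hwA
    obtain ⟨m2, hm2B, hm2⟩ := hWBr hwr hwB
    have hm1f : m1 ∈ ψ ⁻¹' {w} := hm1
    have hm2f : m2 ∈ ψ ⁻¹' {w} := hm2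
    rcases hfibAB w hwseg with h | h
    · have : m2 ∈ ψ ⁻¹' segment ℝ u v ∩ (A ∩ B) :=
        ⟨by simp [Set.mem_preimage, hm2, hwseg], h hm2f, hm2B⟩
      rw [hne] at this; exact this
    · have : m1 ∈ ψ ⁻¹' segment ℝ u v ∩ (A ∩ B) :=
        ⟨by simp [Set.mem_preimage, hm1, hwseg], hm1A, h hm1f⟩
      rw [hne] at this; exact this
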